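/- Any 1-perfect code C ⊆ F_3^{13} of length 13 that is concatenated, i.e., of the form C = ∪_{i=0}^{8} C_i P_{τ(i)} where ∪C_i is a distance-2 MDS code in F_3^9, has rank (dimension of linear span, assuming 0 ∈ C) at most 12. -/

import Mathlib

open Function Finset

lemma zmod3_cases : ∀ s : ZMod 3, s = 0 ∨ s = 1 ∨ s = 2 := by decide

lemma zmod3_distinct_sum : ∀ a b c : ZMod 3, a ≠ b → a ≠ c → b ≠ c → a + b + c = 0 := by decide

lemma zmod3_nonzero_sum : ∀ d e f : ZMod 3, d ≠ 0 → e ≠ 0 → f ≠ 0 → d + e + f = 0 → d = e ∧ d = f := by decide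

lemma zmod3_affine : ∀ v : ZMod 3 → ZMod 3, (∀ t s, v t = v s → t = s) →
    ∀ t s, v t = v s + (t - s) * (v 1 - v 0) := by decide

lemma reach_update {ι α : Type*} [Fintype ι] [DecidableEq ι] [DecidableEq α]
    (z : ι → α) (Q : (ι → α) → Prop) (hz : Q z)
    (hupd : ∀ x j s, Q x → Q (Function.update x j s)) : ∀ x, Q x := by
  have key : ∀ n (x : ι → α), (Finset.univ.filter fun j => x j ≠ z j).card = n → Q x := by
    intro n
    induction n with
    | zero =>
      intro x hx
      have hempty : (Finset.univ.filter fun j => x j ≠ z j) = ∅ := Finset.card_eq_zero.1 hx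
      have : x = z := by
        funext j
        by_contra h
        have : j ∈ (Finset.univ.filter fun j => x j ≠ z j) := by simp [h]
        simp [hempty] at this
      exact this ▸ hz
    | succ n ih =>
      intro x hx
      have hne : (Finset.univ.filter fun j => x j ≠ z j).Nonempty := by
        rw [← Finset.card_pos, hx]; omega
      obtain ⟨j, hj⟩ := hne
      have hfe : (Finset.univ.filter fun k => Function.update x j (z j) k ≠ z k)
          = (Finset.univ.filter fun k => x k ≠ z k).erase j := by
        ext k
        by_cases hk : k = j
        · subst hk; simp
        · simp [Function.update_of_ne hk, hk]
      have hcard : (Finset.univ.filter fun k => Function.update x j (z j) k ≠ z k).card = n := by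
        rw [hfe, Finset.card_erase_of_mem hj, hx]; omega
      have hQ : Q (Function.update x j (z j)) := ih _ hcard
      have := hupd (Function.update x j (z j)) j (x j) hQ
      simpa [Function.update_idem, Function.update_eq_self] using this
  intro x; exact key _ x rfl

lemma hyperplane (M : Set (Fin 9 → ZMod 3)) (h0 : (0 : Fin 9 → ZMod 3) ∈ M)
    (hline : ∀ (x : Fin 9 → ZMod 3) (i : Fin 9), ∃! t : ZMod 3, Function.update x i t ∈ M) :
    ∃ b : Fin 9 → ZMod 3, b 8 = -1 ∧ ∀ x ∈ M, ∑ j, b j * x j = 0 := by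
  classical
  choose g hg hgu using fun x => hline x 8
  have gmemiff : ∀ x, x ∈ M → x 8 = g x := fun x hx =>
    hgu x (x 8) (by simpa [Function.update_eq_self] using hx)
  have g_upd8 : ∀ (x : Fin 9 → ZMod 3) (s : ZMod 3), g (Function.update x 8 s) = g x := by
    intro x s
    refine (hgu (Function.update x 8 s) (g x) ?_).symm
    show Function.update (Function.update x 8 s) 8 (g x) ∈ M
    rw [Function.update_idem]; exact hg x
  have hinj : ∀ (x : Fin 9 → ZMod 3) (i : Fin 9), i ≠ (8:Fin 9) → ∀ t t' : ZMod 3,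
      g (Function.update x i t) = g (Function.update x i t') → t = t' := by
    intro x i hi t t' hgg
    have h1 : Function.update (Function.update x 8 (g (Function.update x i t))) i t ∈ M := by
      rw [Function.update_comm (show (8:Fin 9) ≠ i from Ne.symm hi)]
      exact hg _
    have h2 : Function.update (Function.update x 8 (g (Function.update x i t))) i t' ∈ M := by
      rw [Function.update_comm (show (8:Fin 9) ≠ i from Ne.symm hi), hgg]
      exact hg _
    exact (hline (Function.update x 8 (g (Function.update x i t))) i).unique h1 h2
  have hsum : ∀ (x : Fin 9 → ZMod 3) (i : Fin 9), i ≠ (8:Fin 9) →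
      g (Function.update x i 0) + g (Function.update x i 1) + g (Function.update x i 2) = 0 := by
    intro x i hi
    refine zmod3_distinct_sum _ _ _ ?_ ?_ ?_
    · intro h; exact absurd (hinj x i hi _ _ h) (by decide)
    · intro h; exact absurd (hinj x i hi _ _ h) (by decide)
    · intro h; exact absurd (hinj x i hi _ _ h) (by decide)
  set slope : (Fin 9 → ZMod 3) → Fin 9 → ZMod 3 :=
    fun x i => g (Function.update x i 1) - g (Function.update x i 0) with hslope
  have slope_ne : ∀ (x : Fin 9 → ZMod 3) (i : Fin 9), i ≠ (8:Fin 9) → slope x i ≠ 0 := by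
    intro x i hi h
    have h' : g (Function.update x i 1) = g (Function.update x i 0) := by
      have := sub_eq_zero.1 h
      exact this
    exact absurd (hinj x i hi _ _ h') (by decide)
  have haff : ∀ (x : Fin 9 → ZMod 3) (i : Fin 9), i ≠ (8:Fin 9) → ∀ t s : ZMod 3,
      g (Function.update x i t) = g (Function.update x i s) + (t - s) * slope x i := by
    intro x i hi t s
    exact zmod3_affine (fun t => g (Function.update x i t)) (hinj x i hi) t s
  have slope_upd : ∀ (x : Fin 9 → ZMod 3) (i : Fin 9), i ≠ (8:Fin 9) →
      ∀ (j : Fin 9) (s : ZMod 3), slope (Function.update x j s) i = slope x i := by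
    intro x i hi j s
    by_cases hj8 : j = (8:Fin 9)
    · subst hj8
      simp only [hslope]
      rw [Function.update_comm (show (8:Fin 9) ≠ i from Ne.symm hi),
        Function.update_comm (show (8:Fin 9) ≠ i from Ne.symm hi), g_upd8, g_upd8]
    · by_cases hji : j = i
      · subst hji; simp only [hslope, Function.update_idem]
      · have hcomm : ∀ u t : ZMod 3, Function.update (Function.update x j u) i t
            = Function.update (Function.update x i t) j u := fun u t =>
          Function.update_comm hji u t x
        have key : ∀ t : ZMod 3, g (Function.update (Function.update x j 0) i t)
            + g (Function.update (Function.update x j 1) i t)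
            + g (Function.update (Function.update x j 2) i t) = 0 := by
          intro t
          rw [hcomm 0 t, hcomm 1 t, hcomm 2 t]
          exact hsum (Function.update x i t) j hj8
        have hsum0 : slope (Function.update x j 0) i + slope (Function.update x j 1) i
            + slope (Function.update x j 2) i = 0 := by
          simp only [hslope]
          linear_combination key 1 - key 0
        obtain ⟨e01, e02⟩ := zmod3_nonzero_sum _ _ _ (slope_ne _ i hi) (slope_ne _ i hi)
          (slope_ne _ i hi) hsum0
        have hall : ∀ u : ZMod 3, slope (Function.update x j u) i
            = slope (Function.update x j 0) i := by
          intro u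
          rcases zmod3_cases u with h | h | h <;> subst h
          · rfl
          · exact e01.symm
          · exact e02.symm
        calc slope (Function.update x j s) i = slope (Function.update x j 0) i := hall s
          _ = slope (Function.update x j (x j)) i := (hall (x j)).symm
          _ = slope x i := by rw [Function.update_eq_self]
  have slope_const : ∀ i : Fin 9, i ≠ (8:Fin 9) → ∀ x, slope x i = slope 0 i := by
    intro i hi
    refine reach_update 0 (fun x => slope x i = slope 0 i) rfl ?_
    intro x j s hQ
    have hQ' : slope x i = slope 0 i := hQ
    show slope (Function.update x j s) i = slope 0 i
    rw [slope_upd x i hi j s]; exact hQ'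
  set a : Fin 9 → ZMod 3 := fun j => if j = (8:Fin 9) then 0 else slope 0 j with ha
  have g0 : g 0 = 0 := by
    have := gmemiff 0 h0
    simpa using this.symm
  have main : ∀ x, g x = ∑ j, a j * x j := by
    apply reach_update 0
    · simp [g0]
    · intro x j s hQ0
      have hQ : g x = ∑ m, a m * x m := hQ0
      show g (Function.update x j s) = ∑ m, a m * Function.update x j s m
      by_cases hj : j = (8:Fin 9)
      · subst hj
        rw [g_upd8, hQ]
        refine Finset.sum_congr rfl fun m _ => ?_
        by_cases hm : m = (8:Fin 9)
        · subst hm; simp [ha]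
        · rw [Function.update_of_ne hm]
      · have h1 : g (Function.update x j s) = g x + (s - x j) * a j := by
          have h2 := haff x j hj s (x j)
          rw [Function.update_eq_self] at h2
          rw [h2, slope_const j hj x, ha]
          simp [hj]
        have hsum2 : ∀ c : ZMod 3, (∑ m, a m * (Function.update x j c) m)
            = a j * c + ∑ m ∈ Finset.univ.erase j, a m * x m := by
          intro c
          have funeq : (fun m => a m * Function.update x j c m)
              = Function.update (fun m => a m * x m) j (a j * c) := by
            funext m
            by_cases hm : m = j
            · subst hm; simp
            · rw [Function.update_of_ne hm, Function.update_of_ne hm]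
          calc (∑ m, a m * (Function.update x j c) m)
              = ∑ m, Function.update (fun m => a m * x m) j (a j * c) m := by rw [funeq]
            _ = a j * c + ∑ m ∈ Finset.univ.erase j, a m * x m := by
                rw [Finset.sum_update_of_mem (Finset.mem_univ j), Finset.sdiff_singleton_eq_erase]
        have e1 := hsum2 s
        have e2 := hsum2 (x j)
        rw [Function.update_eq_self] at e2
        rw [h1, hQ, e1, e2]
        ring
  refine ⟨fun j => if j = (8:Fin 9) then -1 else a j, by simp, ?_⟩
  intro x hx
  have hx8 : x 8 = g x := gmemiff x hx
  have hterm : ∀ j, (if j = (8:Fin 9) then (-1:ZMod 3) else a j) * x j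
      = a j * x j - (if j = (8:Fin 9) then x j else 0) := by
    intro j
    by_cases hj : j = (8:Fin 9)
    · subst hj; simp [ha]
    · simp [hj]
  calc ∑ j, (if j = (8:Fin 9) then (-1:ZMod 3) else a j) * x j
      = ∑ j, (a j * x j - (if j = (8:Fin 9) then x j else 0)) :=
        Finset.sum_congr rfl fun j _ => hterm j
    _ = (∑ j, a j * x j) - ∑ j, (if j = (8:Fin 9) then x j else 0) := Finset.sum_sub_distrib _ _
    _ = g x - x 8 := by rw [← main x]; simp
    _ = 0 := by rw [hx8]; ring

lemma dist_le_one {i : Fin 9} (u u' : Fin 9 → ZMod 3) (h : ∀ k, k ≠ i → u k = u' k) :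
    hammingDist u u' ≤ 1 := by
  have hsub : ({k | u k ≠ u' k} : Finset (Fin 9)) ⊆ {i} := by
    intro k hk
    simp only [Finset.mem_filter, Finset.mem_univ, true_and] at hk
    simp only [Finset.mem_singleton]
    by_contra hki
    have hne : u k ≠ u' k := by simpa using hk
    exact hne (h k hki)
  calc hammingDist u u' = ({k | u k ≠ u' k} : Finset (Fin 9)).card := rfl
    _ ≤ ({i} : Finset (Fin 9)).card := Finset.card_le_card hsub
    _ = 1 := Finset.card_singleton i

lemma exists_unique_line (M : Set (Fin 9 → ZMod 3)) (hMcard : M.ncard = 3 ^ 8)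
    (hMdist : ∀ x ∈ M, ∀ y ∈ M, x ≠ y → 2 ≤ hammingDist x y) :
    ∀ (x : Fin 9 → ZMod 3) (i : Fin 9), ∃! t : ZMod 3, Function.update x i t ∈ M := by
  classical
  intro x i
  -- uniqueness helper: two elements of M agreeing off i are equal
  have huniq : ∀ m ∈ M, ∀ m' ∈ M, (∀ k, k ≠ i → m k = m' k) → m = m' := by
    intro m hm m' hm' hagree
    by_contra hne
    have := hMdist m hm m' hm' hne
    have := dist_le_one (i := i) m m' hagree
    omega
  -- the projection map
  set π : (Fin 9 → ZMod 3) → (Fin 9 → ZMod 3) := fun f => Function.update f i 0 with hπ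
  have hinjOn : Set.InjOn π M := by
    intro m hm m' hm' heq
    refine huniq m hm m' hm' fun k hk => ?_
    have := congrFun heq k
    simpa [hπ, Function.update_of_ne hk] using this
  set S : Set (Fin 9 → ZMod 3) := {f | f i = 0} with hS
  have hmaps : π '' M ⊆ S := by
    rintro _ ⟨m, _, rfl⟩
    simp [hπ, hS]
  have hScard : S.ncard = 3 ^ 8 := by
    have hEquiv : S ≃ ({k : Fin 9 // k ≠ i} → ZMod 3) :=
      { toFun := fun f k => f.1 k.1
        invFun := fun h => ⟨fun k => if hk : k ≠ i then h ⟨k, hk⟩ else 0, by simp [hS]⟩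
        left_inv := by
          rintro ⟨f, hf⟩
          ext k
          by_cases hk : k ≠ i
          · simp [hk]
          · push_neg at hk
            subst hk
            simpa [hS] using hf.symm
        right_inv := by
          intro h
          funext k
          simp [k.2] }
    rw [← Nat.card_coe_set_eq, Nat.card_congr hEquiv, Nat.card_eq_fintype_card,
      Fintype.card_fun]
    have h8 : Fintype.card {k : Fin 9 // k ≠ i} = 8 := by
      simp [Fintype.card_subtype_compl]
    rw [h8]
    rfl
  -- image of M under π equals S
  have himg : π '' M = S := by
    refine Set.eq_of_subset_of_ncard_le hmaps ?_ (Set.toFinite _)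
    rw [hScard, Set.ncard_image_of_injOn hinjOn, hMcard]
  -- existence
  have hx : π x ∈ S := by simp [hπ, hS]
  rw [← himg] at hx
  obtain ⟨m, hm, hpm⟩ := hx
  have hagree : ∀ k, k ≠ i → m k = x k := by
    intro k hk
    have := congrFun hpm k
    simpa [hπ, Function.update_of_ne hk] using this
  refine ⟨m i, ?_, ?_⟩
  · show Function.update x i (m i) ∈ M
    have : Function.update x i (m i) = m := by
      funext k
      by_cases hk : k = i
      · subst hk; simp
      · rw [Function.update_of_ne hk]
        exact (hagree k hk).symm
    rw [this]; exact hm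
  · intro t ht
    have hmem : Function.update x i t ∈ M := ht
    have : Function.update x i t = Function.update x i (m i) → t = m i := by
      intro h
      have := congrFun h i
      simpa using this
    apply this
    apply huniq _ hmem _ (by
      have hup : Function.update x i (m i) = m := by
        funext k
        by_cases hk : k = i
        · subst hk; simp
        · rw [Function.update_of_ne hk]; exact (hagree k hk).symm
      rw [hup]; exact hm)
    intro k hk
    rw [Function.update_of_ne hk, Function.update_of_ne hk]


set_option maxHeartbeats 1000000 in
/-- A concatenated ternary 1-perfect code of length 13 containing `0`
(built from a partition of a distance-2 MDS code in `F_3^9` and 1-perfect codes of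
length 4) has rank (dimension of its linear span) at most 12. -/
theorem stmt_11 (Ci : Fin 9 → Set (Fin 9 → ZMod 3))
    (P : Fin 9 → Set (Fin 4 → ZMod 3)) (τ : Equiv.Perm (Fin 9))
    (hdisj : ∀ i j, i ≠ j → Disjoint (Ci i) (Ci j))
    (hMcard : (⋃ i, Ci i).ncard = 3 ^ 8)
    (hMdist : ∀ x ∈ ⋃ i, Ci i, ∀ y ∈ ⋃ i, Ci i, x ≠ y → 2 ≤ hammingDist x y)
    (hP : ∀ i, ∀ x : Fin 4 → ZMod 3, ∃! p, p ∈ P i ∧ hammingDist x p ≤ 1)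
    (C : Set (Fin (9 + 4) → ZMod 3))
    (hC : C = ⋃ i, {w | ∃ c ∈ Ci i, ∃ p ∈ P (τ i), w = Fin.append c p})
    (hperf : ∀ x : Fin (9 + 4) → ZMod 3, ∃! c, c ∈ C ∧ hammingDist x c ≤ 1)
    (h0 : (0 : Fin (9 + 4) → ZMod 3) ∈ C) :
    Module.finrank (ZMod 3) (Submodule.span (ZMod 3) C) ≤ 12 := by
  classical
  have h0M : (0 : Fin 9 → ZMod 3) ∈ ⋃ i, Ci i := by
    rw [hC, Set.mem_iUnion] at h0
    obtain ⟨i, c, hc, p, hp, heq⟩ := h0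
    have hc0 : c = 0 := by
      funext j
      have := congrFun heq (Fin.castAdd 4 j)
      rw [Fin.append_left] at this
      exact this.symm
    rw [hc0] at hc
    exact Set.mem_iUnion.2 ⟨i, hc⟩
  obtain ⟨b, hb8, hbM⟩ := hyperplane (⋃ i, Ci i) h0M
    (exists_unique_line (⋃ i, Ci i) hMcard hMdist)
  -- the linear functional
  let F : (Fin (9 + 4) → ZMod 3) →ₗ[ZMod 3] ZMod 3 :=
    { toFun := fun w => ∑ j : Fin 9, b j * w (Fin.castAdd 4 j)
      map_add' := by
        intro w w'
        simp [mul_add, Finset.sum_add_distrib]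
      map_smul' := by
        intro c w
        simp only [Pi.smul_apply, smul_eq_mul, RingHom.id_apply, Finset.mul_sum]
        exact Finset.sum_congr rfl fun j _ => by ring }
  have hCF : C ⊆ (LinearMap.ker F : Set (Fin (9 + 4) → ZMod 3)) := by
    intro w hw
    rw [hC, Set.mem_iUnion] at hw
    obtain ⟨i, c, hc, p, hp, rfl⟩ := hw
    simp only [SetLike.mem_coe, LinearMap.mem_ker]
    show ∑ j : Fin 9, b j * Fin.append c p (Fin.castAdd 4 j) = 0
    calc ∑ j : Fin 9, b j * Fin.append c p (Fin.castAdd 4 j)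
        = ∑ j : Fin 9, b j * c j :=
          Finset.sum_congr rfl fun j _ => by rw [Fin.append_left]
      _ = 0 := hbM c (Set.mem_iUnion.2 ⟨i, hc⟩)
  have hspan : Submodule.span (ZMod 3) C ≤ LinearMap.ker F := Submodule.span_le.2 hCF
  -- F is surjective
  let d : Fin (9 + 4) → ZMod 3 := fun k => if k = Fin.castAdd 4 (8 : Fin 9) then 1 else 0
  have hFval : F d = -1 := by
    show (∑ j : Fin 9, b j * d (Fin.castAdd 4 j)) = -1
    have hterm : ∀ j : Fin 9, b j * d (Fin.castAdd 4 j)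
        = if j = (8 : Fin 9) then b j else 0 := by
      intro j
      show b j * (if Fin.castAdd 4 j = Fin.castAdd 4 (8 : Fin 9) then (1 : ZMod 3) else 0)
          = if j = (8 : Fin 9) then b j else 0
      have hiff : (Fin.castAdd 4 j = Fin.castAdd 4 (8 : Fin 9)) ↔ j = (8 : Fin 9) := by
        rw [Fin.ext_iff, Fin.ext_iff, Fin.coe_castAdd, Fin.coe_castAdd]
      by_cases hj : j = (8 : Fin 9)
      · rw [if_pos (hiff.2 hj), if_pos hj, mul_one]
      · rw [if_neg (fun h => hj (hiff.1 h)), if_neg hj, mul_zero]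
    rw [Finset.sum_congr rfl fun j _ => hterm j, Finset.sum_ite_eq' Finset.univ (8 : Fin 9)]
    simp [hb8]
  have hsurj : Function.Surjective F := by
    intro c
    refine ⟨(-c) • d, ?_⟩
    rw [map_smul, hFval, smul_eq_mul]
    ring
  have hrange : Module.finrank (ZMod 3) (LinearMap.range F) = 1 := by
    rw [LinearMap.range_eq_top.2 hsurj, finrank_top, Module.finrank_self]
  have hadd := LinearMap.finrank_range_add_finrank_ker F
  have hdom : Module.finrank (ZMod 3) (Fin (9 + 4) → ZMod 3) = 13 := by
    rw [Module.finrank_pi, Fintype.card_fin]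
  have hker : Module.finrank (ZMod 3) (LinearMap.ker F) ≤ 12 := by
    rw [hdom, hrange] at hadd
    omega
  exact le_trans (Submodule.finrank_mono hspan) hker
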